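/- arXiv:2505.22896 — 5 statements merged into one kernel-verified Lean document; each statement's English description precedes it below -/
import Mathlib

section
/- For integer p with |p| ≤ n, the finite sum ((-1)^n π / 2^(2n+1)) · Σ_{k=0}^{2n+1} C(2n+1,k)(-1)^k H(p + n + 1/2 - k) equals (-1)^p (√π/2) Γ(n+1)Γ(n+1/2)/(Γ(n-p+1)Γ(n+p+1)). -/
open Real

/-- The Heaviside step function. -/
noncomputable def H (x : ℝ) : ℝ := if 0 ≤ x then 1 else 0

lemma alt_sum (N m : ℕ) :
    ∑ k ∈ Finset.range (m + 1), ((N + 1).choose k : ℝ) * (-1 : ℝ) ^ k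
      = (-1 : ℝ) ^ m * (N.choose m : ℝ) := by
  induction m with
  | zero => simp
  | succ m ih =>
      rw [Finset.sum_range_succ, ih, Nat.choose_succ_succ]
      push_cast
      ring

lemma gamma_half (n : ℕ) :
    Real.Gamma ((n : ℝ) + 1 / 2)
      = Real.sqrt π * (Nat.factorial (2 * n) : ℝ) / (4 ^ n * (Nat.factorial n : ℝ)) := by
  induction n with
  | zero => simpa using Real.Gamma_one_half_eq
  | succ n ih =>
      have hne : ((n : ℝ) + 1 / 2) ≠ 0 := by positivity
      have h : ((n : ℝ) + 1) + 1 / 2 = ((n : ℝ) + 1 / 2) + 1 := by ring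
      rw [show ((n + 1 : ℕ) : ℝ) = (n : ℝ) + 1 by push_cast; ring, h,
        Real.Gamma_add_one hne, ih]
      have h1 : (Nat.factorial (2 * (n + 1)) : ℝ)
          = (2 * n + 2) * (2 * n + 1) * (Nat.factorial (2 * n) : ℝ) := by
        have : 2 * (n + 1) = (2 * n + 1) + 1 := by ring
        rw [this, Nat.factorial_succ, Nat.factorial_succ]
        push_cast
        ring
      have h2 : (Nat.factorial (n + 1) : ℝ) = (n + 1) * (Nat.factorial n : ℝ) := by
        rw [Nat.factorial_succ]; push_cast; ring
      rw [h1, h2]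
      have hf : (Nat.factorial n : ℝ) ≠ 0 := Nat.cast_ne_zero.2 n.factorial_ne_zero
      have h4 : (4 : ℝ) ^ n ≠ 0 := by positivity
      field_simp
      ring

theorem heaviside_sum_eq_gamma (n : ℕ) (p : ℤ) (hp : |p| ≤ (n : ℤ)) :
    ((-1 : ℝ) ^ n * π / 2 ^ (2 * n + 1)) *
      ∑ k ∈ Finset.range (2 * n + 2),
        (Nat.choose (2 * n + 1) k : ℝ) * (-1 : ℝ) ^ k * H ((p : ℝ) + n + 1 / 2 - k) =
    (-1 : ℝ) ^ p * (Real.sqrt π / 2) *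
      (Real.Gamma (n + 1) * Real.Gamma (n + 1 / 2)) /
      (Real.Gamma ((n : ℝ) - p + 1) * Real.Gamma ((n : ℝ) + p + 1)) := by
  obtain ⟨hp1, hp2⟩ := abs_le.1 hp
  -- m = n + p as a natural number
  obtain ⟨m, hm⟩ := Int.eq_ofNat_of_zero_le (by linarith : (0 : ℤ) ≤ p + n)
  -- a = n - p as a natural number
  obtain ⟨a, ha⟩ := Int.eq_ofNat_of_zero_le (by linarith : (0 : ℤ) ≤ (n : ℤ) - p)
  have hmr : (p : ℝ) + n = m := by exact_mod_cast congrArg (Int.cast : ℤ → ℝ) hm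
  have hm2n : m ≤ 2 * n := by omega
  have ham : a + m = 2 * n := by omega
  -- Step 1: evaluate the Heaviside sum
  have hH : ∀ k : ℕ, H ((p : ℝ) + n + 1 / 2 - k) = if k ∈ Finset.range (m + 1) then 1 else 0 := by
    intro k
    have hiff : 0 ≤ (p : ℝ) + n + 1 / 2 - k ↔ k ∈ Finset.range (m + 1) := by
      rw [Finset.mem_range]
      constructor
      · intro h
        by_contra h'
        have : (m : ℝ) + 1 ≤ k := by exact_mod_cast (by omega : m + 1 ≤ k)
        rw [hmr] at h; linarith
      · intro h
        have : (k : ℝ) ≤ m := by exact_mod_cast (by omega : k ≤ m)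
        rw [hmr]; linarith
    unfold H
    exact if_congr hiff rfl rfl
  have hsum : ∑ k ∈ Finset.range (2 * n + 2),
      (Nat.choose (2 * n + 1) k : ℝ) * (-1 : ℝ) ^ k * H ((p : ℝ) + n + 1 / 2 - k)
      = (-1 : ℝ) ^ m * ((2 * n).choose m : ℝ) := by
    have : ∀ k ∈ Finset.range (2 * n + 2),
        (Nat.choose (2 * n + 1) k : ℝ) * (-1 : ℝ) ^ k * H ((p : ℝ) + n + 1 / 2 - k)
        = if k ∈ Finset.range (m + 1) then
            (Nat.choose (2 * n + 1) k : ℝ) * (-1 : ℝ) ^ k else 0 := by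
      intro k _
      rw [hH k]
      split <;> simp
    rw [Finset.sum_congr rfl this, Finset.sum_ite_mem,
      Finset.inter_eq_right.mpr (Finset.range_subset_range.2 (by omega : m + 1 ≤ 2 * n + 2))]
    exact alt_sum (2 * n) m
  rw [hsum]
  -- Step 2: Gamma values
  have hg1 : Real.Gamma ((n : ℝ) + 1) = (Nat.factorial n : ℝ) := by
    exact_mod_cast Real.Gamma_nat_eq_factorial n
  have hg2 : Real.Gamma ((n : ℝ) - p + 1) = (Nat.factorial a : ℝ) := by
    have : (n : ℝ) - p = a := by exact_mod_cast congrArg (Int.cast : ℤ → ℝ) ha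
    rw [this]; exact_mod_cast Real.Gamma_nat_eq_factorial a
  have hg3 : Real.Gamma ((n : ℝ) + p + 1) = (Nat.factorial m : ℝ) := by
    have : (n : ℝ) + p = m := by rw [← hmr]; ring
    rw [this]; exact_mod_cast Real.Gamma_nat_eq_factorial m
  rw [hg1, hg2, hg3, gamma_half]
  -- Step 3: signs
  have hsign : (-1 : ℝ) ^ n * (-1 : ℝ) ^ m = (-1 : ℝ) ^ p := by
    have : (-1 : ℝ) ^ n * (-1 : ℝ) ^ m = (-1 : ℝ) ^ ((n : ℤ) + m) := by
      rw [zpow_add₀ (by norm_num : (-1 : ℝ) ≠ 0)]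
      norm_num [zpow_natCast]
    rw [this, show (n : ℤ) + m = p + 2 * n by omega, zpow_add₀ (by norm_num : (-1 : ℝ) ≠ 0)]
    have : ((-1 : ℝ) ^ (2 * (n : ℤ))) = 1 := by
      rw [zpow_mul]; norm_num
    rw [this, mul_one]
  -- Step 4: final arithmetic
  have hchoose : ((2 * n).choose m : ℝ)
      = (Nat.factorial (2 * n) : ℝ) / ((Nat.factorial m : ℝ) * (Nat.factorial a : ℝ)) := by
    rw [Nat.cast_choose ℝ hm2n, show 2 * n - m = a by omega]
  rw [hchoose]
  have hsq : Real.sqrt π * Real.sqrt π = π := Real.mul_self_sqrt pi_pos.le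
  have hfm : (Nat.factorial m : ℝ) ≠ 0 := Nat.cast_ne_zero.2 m.factorial_ne_zero
  have hfa : (Nat.factorial a : ℝ) ≠ 0 := Nat.cast_ne_zero.2 a.factorial_ne_zero
  have hfn : (Nat.factorial n : ℝ) ≠ 0 := Nat.cast_ne_zero.2 n.factorial_ne_zero
  have h4 : (4 : ℝ) ^ n ≠ 0 := by positivity
  have h2 : (2 : ℝ) ^ (2 * n + 1) = 2 * 4 ^ n := by
    rw [pow_succ, pow_mul]; norm_num; ring
  have key : π * (Nat.factorial (2 * n) : ℝ) /
      (((Nat.factorial m : ℝ) * (Nat.factorial a : ℝ)) * (2 * 4 ^ n))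
      = Real.sqrt π / 2 * ((Nat.factorial n : ℝ) *
          (Real.sqrt π * (Nat.factorial (2 * n) : ℝ) / (4 ^ n * (Nat.factorial n : ℝ)))) /
        ((Nat.factorial m : ℝ) * (Nat.factorial a : ℝ)) := by
    rw [← hsq, show 2 * n = n * 2 from Nat.mul_comm 2 n]
    field_simp
    rw [Real.sqrt_sq (Real.sqrt_nonneg π)]
  rw [← hsign, h2]
  linear_combination ((-1 : ℝ) ^ n * (-1 : ℝ) ^ m) * key
end

section
/- For all real u, v > 0 with u ≠ v and all real ν > 0, ∫₀^∞ ∫₀^∞ (x+y)^{ν−1} e^{-ux − vy} dx dy = Γ(ν) · (u^ν − v^ν) / ((u − v)(uv)^ν). -/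
open Real MeasureTheory Set Filter
open scoped Topology

section Aux

variable {ν : ℝ}

/-- integrability of `t ^ (ν-1) * exp (-(a*t))` on `Ioi 0`. -/
lemma aux_integrable (hν : 0 < ν) {a : ℝ} (ha : 0 < a) :
    IntegrableOn (fun t : ℝ => t ^ (ν - 1) * Real.exp (-(a * t))) (Ioi 0) := by
  simpa only [Real.rpow_one, neg_mul] using
    integrableOn_rpow_mul_exp_neg_mul_rpow (s := ν - 1) (p := 1) (b := a)
      (by linarith) zero_lt_one ha

lemma aux_continuousAt (hν : 0 < ν) (a : ℝ) {x : ℝ} (hx : 0 < x) :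
    ContinuousAt (fun t : ℝ => t ^ (ν - 1) * Real.exp (-(a * t))) x := by
  exact ((Real.continuousAt_rpow_const x (ν - 1) (Or.inl hx.ne')).mul
    ((Real.continuous_exp.comp ((continuous_const.mul continuous_id).neg)).continuousAt))

lemma aux_measurable (a : ℝ) :
    Measurable (fun t : ℝ => t ^ (ν - 1) * Real.exp (-(a * t))) := by
  exact (measurable_id.pow_const _).mul
    (Real.measurable_exp.comp ((measurable_const.mul measurable_id).neg))

/-- Split: `G a x = total - ∫ 0..x` for `0 ≤ x`. -/
lemma aux_G_eq (hν : 0 < ν) {a : ℝ} (ha : 0 < a) {x : ℝ} (hx : 0 ≤ x) :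
    (∫ t in Ioi x, t ^ (ν - 1) * Real.exp (-(a * t))) =
      (∫ t in Ioi (0:ℝ), t ^ (ν - 1) * Real.exp (-(a * t)))
        - ∫ t in (0:ℝ)..x, t ^ (ν - 1) * Real.exp (-(a * t)) := by
  have h1 : IntegrableOn (fun t : ℝ => t ^ (ν - 1) * Real.exp (-(a * t))) (Ioc 0 x) :=
    (aux_integrable hν ha).mono_set Ioc_subset_Ioi_self
  have h2 : IntegrableOn (fun t : ℝ => t ^ (ν - 1) * Real.exp (-(a * t))) (Ioi x) :=
    (aux_integrable hν ha).mono_set (Ioi_subset_Ioi hx)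
  rw [intervalIntegral.integral_of_le hx, ← Ioc_union_Ioi_eq_Ioi hx,
    setIntegral_union (Ioc_disjoint_Ioi le_rfl) measurableSet_Ioi h1 h2]
  ring

lemma aux_G_deriv (hν : 0 < ν) {a : ℝ} (ha : 0 < a) {x : ℝ} (hx : 0 < x) :
    HasDerivAt (fun x => ∫ t in Ioi x, t ^ (ν - 1) * Real.exp (-(a * t)))
      (-(x ^ (ν - 1) * Real.exp (-(a * x)))) x := by
  have hii : IntervalIntegrable (fun t : ℝ => t ^ (ν - 1) * Real.exp (-(a * t))) volume 0 x :=
    (intervalIntegrable_iff_integrableOn_Ioc_of_le hx.le).mpr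
      ((aux_integrable hν ha).mono_set Ioc_subset_Ioi_self)
  have hd : HasDerivAt (fun x => (∫ t in Ioi (0:ℝ), t ^ (ν - 1) * Real.exp (-(a * t)))
      - ∫ t in (0:ℝ)..x, t ^ (ν - 1) * Real.exp (-(a * t)))
      (-(x ^ (ν - 1) * Real.exp (-(a * x)))) x := by
    exact ((intervalIntegral.integral_hasDerivAt_right hii
      ((aux_measurable a).stronglyMeasurable.stronglyMeasurableAtFilter)
      (aux_continuousAt hν a hx)).const_sub _)
  refine hd.congr_of_eventuallyEq ?_
  filter_upwards [isOpen_Ioi.mem_nhds hx] with y hy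
  exact aux_G_eq hν ha (le_of_lt hy)

lemma aux_G_cont0 (hν : 0 < ν) {a : ℝ} (ha : 0 < a) :
    ContinuousWithinAt (fun x => ∫ t in Ioi x, t ^ (ν - 1) * Real.exp (-(a * t))) (Ici 0) 0 := by
  have hii : IntervalIntegrable (fun t : ℝ => t ^ (ν - 1) * Real.exp (-(a * t))) volume
      (min 0 0) (max 0 1) := by
    rw [min_self, max_eq_right zero_le_one,
      intervalIntegrable_iff_integrableOn_Ioc_of_le zero_le_one]
    exact (aux_integrable hν ha).mono_set Ioc_subset_Ioi_self
  have hP : ContinuousWithinAt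
      (fun x => ∫ t in (0:ℝ)..x, t ^ (ν - 1) * Real.exp (-(a * t))) (Icc 0 1) 0 :=
    intervalIntegral.continuousWithinAt_primitive (measure_singleton 0) hii
  have hP' : ContinuousWithinAt
      (fun x => ∫ t in (0:ℝ)..x, t ^ (ν - 1) * Real.exp (-(a * t))) (Ici 0) 0 :=
    hP.mono_of_mem_nhdsWithin (Icc_mem_nhdsGE_of_mem ⟨le_rfl, zero_lt_one⟩)
  have hC : ContinuousWithinAt (fun x => (∫ t in Ioi (0:ℝ), t ^ (ν - 1) * Real.exp (-(a * t)))
      - ∫ t in (0:ℝ)..x, t ^ (ν - 1) * Real.exp (-(a * t))) (Ici 0) 0 :=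
    continuousWithinAt_const.sub hP'
  refine hC.congr (fun y hy => ?_) ?_
  · exact aux_G_eq hν ha hy
  · exact aux_G_eq hν ha le_rfl

/-- translation of the inner integral. -/
lemma aux_translate (hν : 0 < ν) (a x : ℝ) :
    (∫ y in Ioi (0:ℝ), (x + y) ^ (ν - 1) * Real.exp (-(a * (x + y)))) =
      ∫ t in Ioi x, t ^ (ν - 1) * Real.exp (-(a * t)) := by
  have := (measurePreserving_add_right volume x).setIntegral_preimage_emb
    (Homeomorph.addRight x).isClosedEmbedding.measurableEmbedding
    (fun t : ℝ => t ^ (ν - 1) * Real.exp (-(a * t))) (Ioi x)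
  rw [← this]
  have hpre : (fun y : ℝ => y + x) ⁻¹' Ioi x = Ioi 0 := by
    ext y; simp [Set.mem_preimage]
  rw [show ((· + x) ⁻¹' Ioi x) = Ioi (0:ℝ) from hpre]
  refine setIntegral_congr_fun measurableSet_Ioi (fun y _ => ?_)
  rw [add_comm x y]

end Aux

theorem bivariate_laplace_pow (u v ν : ℝ) (hu : 0 < u) (hv : 0 < v) (huv : u ≠ v)
    (hν : 0 < ν) :
    (∫ x in Set.Ioi (0:ℝ), ∫ y in Set.Ioi (0:ℝ),
        (x + y) ^ (ν - 1) * Real.exp (-(u * x) - v * y)) =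
      Real.Gamma ν * (u ^ ν - v ^ ν) / ((u - v) * (u * v) ^ ν) := by
  have hc : u - v ≠ 0 := sub_ne_zero.mpr huv
  set Gv : ℝ → ℝ := fun x => ∫ t in Ioi x, t ^ (ν - 1) * Real.exp (-(v * t)) with hGvdef
  set Gu : ℝ → ℝ := fun x => ∫ t in Ioi x, t ^ (ν - 1) * Real.exp (-(u * t)) with hGudef
  have hinner : ∀ x : ℝ, (∫ y in Ioi (0:ℝ), (x + y) ^ (ν - 1) * Real.exp (-(u * x) - v * y))
      = Real.exp (-((u - v) * x)) * Gv x := by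
    intro x
    simp only [hGvdef]
    rw [← aux_translate hν v x, ← integral_const_mul]
    refine setIntegral_congr_fun measurableSet_Ioi (fun y _ => ?_)
    have h1 : Real.exp (-(u * x) - v * y)
        = Real.exp (-((u - v) * x)) * Real.exp (-(v * (x + y))) := by
      rw [← Real.exp_add]; congr 1; ring
    rw [h1]; ring
  set H : ℝ → ℝ := fun x => -(1/(u - v)) * (Real.exp (-((u - v) * x)) * Gv x)
      + (1/(u - v)) * Gu x with hHdef
  have hHderiv : ∀ x ∈ Ioi (0:ℝ), HasDerivAt H (Real.exp (-((u - v) * x)) * Gv x) x := by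
    intro x hx
    have hx' : (0:ℝ) < x := hx
    have dE : HasDerivAt (fun x : ℝ => Real.exp (-((u - v) * x)))
        (Real.exp (-((u - v) * x)) * -((u - v) * 1)) x :=
      (((hasDerivAt_id x).const_mul (u - v)).neg).exp
    have dGv := aux_G_deriv hν hv hx'
    have dGu := aux_G_deriv hν hu hx'
    have dP := dE.mul dGv
    have dH := (dP.const_mul (-(1/(u - v)))).add (dGu.const_mul (1/(u - v)))
    refine dH.congr_deriv ?_
    symm
    have key : Real.exp (-((u - v) * x)) * Real.exp (-(v * x)) = Real.exp (-(u * x)) := by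
      rw [← Real.exp_add]; congr 1; ring
    rw [← key]
    field_simp
    ring
  have hnn : ∀ x ∈ Ioi (0:ℝ), 0 ≤ Real.exp (-((u - v) * x)) * Gv x := by
    intro x hx
    refine mul_nonneg (Real.exp_pos _).le ?_
    refine setIntegral_nonneg measurableSet_Ioi (fun t ht => ?_)
    exact mul_nonneg (Real.rpow_nonneg (le_of_lt (lt_trans hx ht)) _) (Real.exp_pos _).le
  have hHcont : ContinuousWithinAt H (Ici 0) 0 := by
    have h1 : ContinuousWithinAt (fun x : ℝ => Real.exp (-((u - v) * x))) (Ici 0) 0 :=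
      (Real.continuous_exp.comp (continuous_const.mul continuous_id).neg).continuousWithinAt
    exact (continuousWithinAt_const.mul (h1.mul (aux_G_cont0 hν hv))).add
      (continuousWithinAt_const.mul (aux_G_cont0 hν hu))
  have hGuTop : Tendsto Gu atTop (𝓝 0) := by
    have h := intervalIntegral_tendsto_integral_Ioi 0 (aux_integrable hν hu) tendsto_id
    have h2 : Tendsto (fun x : ℝ => (∫ t in Ioi (0:ℝ), t ^ (ν - 1) * Real.exp (-(u * t)))
        - ∫ t in (0:ℝ)..x, t ^ (ν - 1) * Real.exp (-(u * t))) atTop (𝓝 0) := by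
      have h3 : Tendsto (fun x : ℝ => (∫ t in Ioi (0:ℝ), t ^ (ν - 1) * Real.exp (-(u * t)))
          - ∫ t in (0:ℝ)..x, t ^ (ν - 1) * Real.exp (-(u * t))) atTop
          (𝓝 ((∫ t in Ioi (0:ℝ), t ^ (ν - 1) * Real.exp (-(u * t)))
            - ∫ t in Ioi (0:ℝ), t ^ (ν - 1) * Real.exp (-(u * t)))) :=
        tendsto_const_nhds.sub h
      rwa [sub_self] at h3
    refine Tendsto.congr' ?_ h2
    filter_upwards [eventually_ge_atTop (0:ℝ)] with x hx
    exact (aux_G_eq hν hu hx).symm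
  have hmin : (0:ℝ) < min u v := lt_min hu hv
  have hminu : min u v ≤ u := min_le_left _ _
  have hminv : min u v ≤ v := min_le_right _ _
  set m : ℝ := min u v / 2 with hmdef
  have hm0 : 0 < m := by rw [hmdef]; linarith
  have hmv : 0 < v - m := by rw [hmdef]; linarith
  have hmu : 0 < u - m := by rw [hmdef]; linarith
  have hEGvTop : Tendsto (fun x => Real.exp (-((u - v) * x)) * Gv x) atTop (𝓝 0) := by
    have hsmall : ∀ᶠ t : ℝ in atTop, t ^ (ν - 1) * Real.exp (-(m * t)) ≤ 1 := by
      have h := tendsto_rpow_mul_exp_neg_mul_atTop_nhds_zero (ν - 1) m hm0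
      filter_upwards [h.eventually (gt_mem_nhds zero_lt_one)] with t ht
      rw [show -(m * t) = -m * t by ring]
      exact ht.le
    obtain ⟨X, hX⟩ := eventually_atTop.mp hsmall
    have hb : ∀ᶠ x : ℝ in atTop, Real.exp (-((u - v) * x)) * Gv x
        ≤ Real.exp (-((u - m) * x)) / (v - m) := by
      filter_upwards [eventually_ge_atTop X, eventually_ge_atTop (0:ℝ)] with x hxX hx0
      have hgint : IntegrableOn (fun t : ℝ => Real.exp (-((v - m) * t))) (Ioi x) := by
        simpa only [neg_mul] using exp_neg_integrableOn_Ioi x hmv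
      have hGb : Gv x ≤ ∫ t in Ioi x, Real.exp (-((v - m) * t)) := by
        refine setIntegral_mono_on
          ((aux_integrable hν hv).mono_set (Ioi_subset_Ioi hx0)) hgint
          measurableSet_Ioi (fun t ht => ?_)
        have htX : X ≤ t := le_trans hxX (le_of_lt ht)
        have hsplit : Real.exp (-(v * t))
            = Real.exp (-(m * t)) * Real.exp (-((v - m) * t)) := by
          rw [← Real.exp_add]; congr 1; ring
        calc t ^ (ν - 1) * Real.exp (-(v * t))
            = (t ^ (ν - 1) * Real.exp (-(m * t))) * Real.exp (-((v - m) * t)) := by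
              rw [hsplit]; ring
          _ ≤ 1 * Real.exp (-((v - m) * t)) :=
              mul_le_mul_of_nonneg_right (hX t htX) (Real.exp_pos _).le
          _ = Real.exp (-((v - m) * t)) := one_mul _
      have hval : (∫ t in Ioi x, Real.exp (-((v - m) * t)))
          = Real.exp (-((v - m) * x)) / (v - m) := by
        have h0 := integral_comp_mul_left_Ioi (fun t : ℝ => Real.exp (-t)) x hmv
        simp only [smul_eq_mul] at h0
        rw [h0, integral_exp_neg_Ioi]
        rw [inv_mul_eq_div]
      have hGnn : 0 ≤ Gv x := by
        refine setIntegral_nonneg measurableSet_Ioi (fun t ht => ?_)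
        exact mul_nonneg (Real.rpow_nonneg (le_of_lt (lt_of_le_of_lt hx0 ht)) _)
          (Real.exp_pos _).le
      calc Real.exp (-((u - v) * x)) * Gv x
          ≤ Real.exp (-((u - v) * x)) * (Real.exp (-((v - m) * x)) / (v - m)) := by
            refine mul_le_mul_of_nonneg_left ?_ (Real.exp_pos _).le
            rw [← hval]; exact hGb
        _ = Real.exp (-((u - m) * x)) / (v - m) := by
            rw [mul_div_assoc', ← Real.exp_add]
            congr 2; ring
    have hupper : Tendsto (fun x : ℝ => Real.exp (-((u - m) * x)) / (v - m)) atTop (𝓝 0) := by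
      have h1 : Tendsto (fun x : ℝ => (u - m) * x) atTop atTop :=
        tendsto_id.const_mul_atTop hmu
      have h2 : Tendsto (fun x : ℝ => Real.exp (-((u - m) * x))) atTop (𝓝 0) :=
        Real.tendsto_exp_neg_atTop_nhds_zero.comp h1
      simpa using h2.div_const (v - m)
    refine squeeze_zero' ?_ hb hupper
    filter_upwards [eventually_gt_atTop (0:ℝ)] with x hx
    exact hnn x hx
  have hHtop : Tendsto H atTop (𝓝 0) := by
    have := (hEGvTop.const_mul (-(1/(u - v)))).add (hGuTop.const_mul (1/(u - v)))
    simpa [hHdef] using this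
  have hmain : (∫ x in Ioi (0:ℝ), Real.exp (-((u - v) * x)) * Gv x) = 0 - H 0 :=
    integral_Ioi_of_hasDerivAt_of_nonneg hHcont hHderiv hnn hHtop
  have hGv0 : Gv 0 = (1/v) ^ ν * Real.Gamma ν := integral_rpow_mul_exp_neg_mul_Ioi hν hv
  have hGu0 : Gu 0 = (1/u) ^ ν * Real.Gamma ν := integral_rpow_mul_exp_neg_mul_Ioi hν hu
  have hH0 : H 0 = -(1/(u - v)) * Gv 0 + (1/(u - v)) * Gu 0 := by
    rw [hHdef]; simp
  rw [setIntegral_congr_fun measurableSet_Ioi (fun x _ => hinner x), hmain, hH0, hGv0, hGu0]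
  have huν : (0:ℝ) < u ^ ν := Real.rpow_pos_of_pos hu ν
  have hvν : (0:ℝ) < v ^ ν := Real.rpow_pos_of_pos hv ν
  have h1v : (1/v : ℝ) ^ ν = (v ^ ν)⁻¹ := by
    rw [one_div, ← Real.rpow_neg_one v, ← Real.rpow_mul hv.le]
    rw [show (-1 : ℝ) * ν = -ν by ring, Real.rpow_neg hv.le]
  have h1u : (1/u : ℝ) ^ ν = (u ^ ν)⁻¹ := by
    rw [one_div, ← Real.rpow_neg_one u, ← Real.rpow_mul hu.le]
    rw [show (-1 : ℝ) * ν = -ν by ring, Real.rpow_neg hu.le]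
  rw [h1v, h1u, Real.mul_rpow hu.le hv.le]
  field_simp
  ring
end

section
/- For every natural number n ≥ 1, the improper integral ∫_{ℝⁿ} sin(‖x‖)/‖x‖ⁿ dx, defined as the limit of integrals over balls of radius R as R → ∞, equals π^{n/2+1} / Γ(n/2). -/
open Real MeasureTheory Filter
open Set

lemma aux_exp_mul_sin (t R : ℝ) :
    ∫ x in (0:ℝ)..R, Real.exp (-(t*x)) * Real.sin x
      = (1 - Real.exp (-(t*R)) * (Real.cos R + t * Real.sin R)) / (1 + t^2) := by
  have ht : (1 + t^2) ≠ 0 := by positivity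
  have key : ∀ x : ℝ, HasDerivAt
      (fun x => -(Real.exp (-(t*x)) * (Real.cos x + t * Real.sin x)) / (1 + t^2))
      (Real.exp (-(t*x)) * Real.sin x) x := by
    intro x
    have h1 : HasDerivAt (fun x : ℝ => -(t*x)) (-t) x := by
      have h := ((hasDerivAt_id x).const_mul t).neg
      simp only [id, mul_one] at h
      exact h
    have h2 := h1.exp
    have h3 : HasDerivAt (fun x => Real.cos x + t * Real.sin x)
        (-Real.sin x + t * Real.cos x) x :=
      (Real.hasDerivAt_cos x).add ((Real.hasDerivAt_sin x).const_mul t)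
    have h4 := ((h2.mul h3).neg).div_const (1 + t^2)
    refine h4.congr_deriv ?_
    rw [div_eq_iff ht]
    ring
  have hc : Continuous fun x => Real.exp (-(t*x)) * Real.sin x := by continuity
  rw [intervalIntegral.integral_eq_sub_of_hasDerivAt (fun x _ => key x)
    (hc.intervalIntegrable _ _)]
  simp only [mul_zero, neg_zero, Real.exp_zero, Real.cos_zero, Real.sin_zero]
  field_simp
  ring

lemma aux_integral_exp_neg_mul {a : ℝ} (ha : 0 < a) :
    ∫ t in Ioi (0:ℝ), Real.exp (-(a*t)) = 1/a := by
  have hint : IntegrableOn (fun t => Real.exp (-(a*t))) (Ioi (0:ℝ)) := by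
    simpa [neg_mul] using exp_neg_integrableOn_Ioi 0 ha
  have hderiv : ∀ x ∈ Ioi (0:ℝ), HasDerivAt (fun t => -Real.exp (-(a*t))/a)
      (Real.exp (-(a*x))) x := by
    intro x _
    have h1 : HasDerivAt (fun x : ℝ => -(a*x)) (-a) x := by
      have h := ((hasDerivAt_id x).const_mul a).neg
      simp only [id, mul_one] at h
      exact h
    have h2 := (h1.exp.neg).div_const a
    refine h2.congr_deriv ?_
    rw [div_eq_iff ha.ne']
    ring
  have hcont : ContinuousWithinAt (fun t => -Real.exp (-(a*t))/a) (Ici (0:ℝ)) 0 := by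
    exact Continuous.continuousWithinAt (by continuity)
  have htend : Tendsto (fun t => -Real.exp (-(a*t))/a) atTop (nhds 0) := by
    have : Tendsto (fun t : ℝ => a*t) atTop atTop :=
      tendsto_id.const_mul_atTop ha
    have h := (Real.tendsto_exp_neg_atTop_nhds_zero.comp this).neg.div_const a
    simpa using h
  rw [MeasureTheory.integral_Ioi_of_hasDerivAt_of_tendsto hcont hderiv hint htend]
  simp [neg_div]

lemma aux_err_integrable {R : ℝ} (hR : 0 < R) :
    Integrable (fun t => Real.exp (-(t*R)) * (Real.cos R + t * Real.sin R) / (1 + t^2))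
      (volume.restrict (Ioi (0:ℝ))) := by
  have hmaj : Integrable (fun t => 2 * Real.exp (-(R*t))) (volume.restrict (Ioi (0:ℝ))) := by
    have : IntegrableOn (fun t => Real.exp (-(R*t))) (Ioi (0:ℝ)) := by
      simpa [neg_mul] using exp_neg_integrableOn_Ioi 0 hR
    exact this.const_mul 2
  refine hmaj.mono' ?_ ?_
  · apply Continuous.aestronglyMeasurable
    exact ((((continuous_id.mul continuous_const).neg).rexp).mul
      (continuous_const.add (continuous_id.mul continuous_const))).div
      (continuous_const.add (continuous_pow 2)) (fun t => by positivity)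
  · filter_upwards [ae_restrict_mem measurableSet_Ioi] with t ht
    have ht0 : (0:ℝ) < t := ht
    have h1 : |Real.cos R + t * Real.sin R| ≤ 1 + t := by
      refine (abs_add_le _ _).trans ?_
      have : |t * Real.sin R| ≤ t := by
        rw [abs_mul, abs_of_pos ht0]
        exact mul_le_of_le_one_right ht0.le (abs_sin_le_one R)
      linarith [Real.abs_cos_le_one R]
    rw [Real.norm_eq_abs, abs_div, abs_mul, Real.abs_exp,
      abs_of_pos (by positivity : (0:ℝ) < 1 + t^2), mul_comm R t]
    rw [div_le_iff₀ (by positivity)]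
    nlinarith [Real.exp_pos (-(t*R)), sq_nonneg (4*t - 1), mul_le_mul_of_nonneg_left h1
      (Real.exp_pos (-(t*R))).le]

lemma aux_dirichlet_eq {R : ℝ} (hR : 0 < R) :
    ∫ x in Ioc (0:ℝ) R, Real.sin x / x
      = π/2 - ∫ t in Ioi (0:ℝ),
          Real.exp (-(t*R)) * (Real.cos R + t * Real.sin R) / (1 + t^2) := by
  set μ := volume.restrict (Ioc (0:ℝ) R)
  set ν := volume.restrict (Ioi (0:ℝ))
  have hcont : Continuous fun p : ℝ × ℝ => Real.sin p.1 * Real.exp (-(p.1 * p.2)) := by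
    exact (Real.continuous_sin.comp continuous_fst).mul
      ((continuous_fst.mul continuous_snd).neg.rexp)
  have hint : Integrable (fun p : ℝ × ℝ => Real.sin p.1 * Real.exp (-(p.1 * p.2))) (μ.prod ν) := by
    rw [integrable_prod_iff hcont.aestronglyMeasurable]
    constructor
    · filter_upwards [ae_restrict_mem measurableSet_Ioc] with x hx
      have : IntegrableOn (fun t => Real.exp (-(x*t))) (Ioi (0:ℝ)) := by
        simpa [neg_mul] using exp_neg_integrableOn_Ioi 0 hx.1
      exact this.const_mul _
    · have hbase : Integrable (fun x => |Real.sin x| * x⁻¹) μ := by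
        refine Integrable.mono' (g := fun _ => (1:ℝ)) ?_ ?_ ?_
        · refine integrable_const_iff.mpr (Or.inr ?_)
          exact ⟨by rw [Measure.restrict_apply_univ]; exact measure_Ioc_lt_top⟩
        · exact (Real.measurable_sin.abs.mul measurable_inv).aestronglyMeasurable
        · filter_upwards [ae_restrict_mem measurableSet_Ioc] with x hx
          rw [Real.norm_eq_abs, abs_mul, abs_abs, abs_inv, abs_of_pos hx.1,
            ← div_eq_mul_inv, div_le_one hx.1]
          simpa [abs_of_pos hx.1] using Real.abs_sin_le_abs (x := x)
      refine hbase.congr ?_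
      filter_upwards [ae_restrict_mem measurableSet_Ioc] with x hx
      show |Real.sin x| * x⁻¹ = ∫ t, ‖Real.sin x * Real.exp (-(x * t))‖ ∂ν
      have he : (fun t => ‖Real.sin x * Real.exp (-(x * t))‖)
          = fun t => |Real.sin x| * Real.exp (-(x * t)) := by
        funext t
        rw [Real.norm_eq_abs, abs_mul, Real.abs_exp]
      rw [he, MeasureTheory.integral_const_mul, aux_integral_exp_neg_mul hx.1, mul_one_div,
        div_eq_mul_inv]
  have hswap := MeasureTheory.integral_integral_swap
    (f := fun x t => Real.sin x * Real.exp (-(x * t))) hint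
  have hL : (∫ x, ∫ t, Real.sin x * Real.exp (-(x * t)) ∂ν ∂μ)
      = ∫ x in Ioc (0:ℝ) R, Real.sin x / x := by
    refine setIntegral_congr_fun measurableSet_Ioc fun x hx => ?_
    rw [MeasureTheory.integral_const_mul, aux_integral_exp_neg_mul hx.1, mul_one_div]
  have hRin : (∫ t, ∫ x, Real.sin x * Real.exp (-(x * t)) ∂μ ∂ν)
      = ∫ t in Ioi (0:ℝ),
          (1 - Real.exp (-(t*R)) * (Real.cos R + t * Real.sin R)) / (1 + t^2) := by
    refine setIntegral_congr_fun measurableSet_Ioi fun t _ => ?_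
    rw [← intervalIntegral.integral_of_le hR.le, ← aux_exp_mul_sin t R]
    refine intervalIntegral.integral_congr fun x _ => ?_
    ring_nf
  rw [hL, hRin] at hswap
  rw [show (∫ x in Ioc (0:ℝ) R, Real.sin x / x) = ∫ x, Real.sin x / x ∂μ from rfl, hswap]
  have hsub : ∀ t : ℝ, (1 - Real.exp (-(t*R)) * (Real.cos R + t * Real.sin R)) / (1 + t^2)
      = (1 + t^2)⁻¹ - Real.exp (-(t*R)) * (Real.cos R + t * Real.sin R) / (1 + t^2) := by
    intro t
    rw [sub_div, one_div]
  simp_rw [hsub]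
  rw [MeasureTheory.integral_sub (integrable_inv_one_add_sq.restrict) (aux_err_integrable hR),
    integral_Ioi_inv_one_add_sq]
  simp
  rfl

lemma aux_dirichlet_tendsto :
    Tendsto (fun R : ℝ => ∫ x in Ioc (0:ℝ) R, Real.sin x / x) atTop (nhds (π/2)) := by
  have herr : Tendsto (fun R : ℝ => ∫ t in Ioi (0:ℝ),
      Real.exp (-(t*R)) * (Real.cos R + t * Real.sin R) / (1 + t^2)) atTop (nhds 0) := by
    apply squeeze_zero_norm' (a := fun R => 2 * (1/R))
    · filter_upwards [eventually_gt_atTop (0:ℝ)] with R hR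
      have hmaj : Integrable (fun t => 2 * Real.exp (-(R*t))) (volume.restrict (Ioi (0:ℝ))) := by
        have : IntegrableOn (fun t => Real.exp (-(R*t))) (Ioi (0:ℝ)) := by
          simpa [neg_mul] using exp_neg_integrableOn_Ioi 0 hR
        exact this.const_mul 2
      have hbd : ∀ᵐ t ∂(volume.restrict (Ioi (0:ℝ))),
          ‖Real.exp (-(t*R)) * (Real.cos R + t * Real.sin R) / (1 + t^2)‖
            ≤ 2 * Real.exp (-(R*t)) := by
        filter_upwards [ae_restrict_mem measurableSet_Ioi] with t ht
        have ht0 : (0:ℝ) < t := ht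
        have h1 : |Real.cos R + t * Real.sin R| ≤ 1 + t := by
          refine (abs_add_le _ _).trans ?_
          have : |t * Real.sin R| ≤ t := by
            rw [abs_mul, abs_of_pos ht0]
            exact mul_le_of_le_one_right ht0.le (abs_sin_le_one R)
          linarith [Real.abs_cos_le_one R]
        rw [Real.norm_eq_abs, abs_div, abs_mul, Real.abs_exp,
          abs_of_pos (by positivity : (0:ℝ) < 1 + t^2), mul_comm R t]
        rw [div_le_iff₀ (by positivity)]
        nlinarith [Real.exp_pos (-(t*R)), sq_nonneg (4*t - 1), mul_le_mul_of_nonneg_left h1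
          (Real.exp_pos (-(t*R))).le]
      have hb := MeasureTheory.norm_integral_le_of_norm_le hmaj hbd
      refine hb.trans ?_
      rw [MeasureTheory.integral_const_mul, aux_integral_exp_neg_mul hR]
    · simpa using (tendsto_inv_atTop_zero (𝕜 := ℝ)).const_mul 2
  have : Tendsto (fun R : ℝ => π/2 - ∫ t in Ioi (0:ℝ),
      Real.exp (-(t*R)) * (Real.cos R + t * Real.sin R) / (1 + t^2)) atTop (nhds (π/2 - 0)) :=
    tendsto_const_nhds.sub herr
  rw [sub_zero] at this
  refine this.congr' ?_
  filter_upwards [eventually_gt_atTop (0:ℝ)] with R hR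
  exact (aux_dirichlet_eq hR).symm

theorem integral_sin_norm_div_norm_pow (n : ℕ) (hn : 1 ≤ n) :
    Tendsto (fun R : ℝ =>
        ∫ x in Metric.closedBall (0 : EuclideanSpace ℝ (Fin n)) R,
          Real.sin ‖x‖ / ‖x‖ ^ n)
      atTop
      (nhds (π ^ ((n : ℝ) / 2 + 1) / Real.Gamma ((n : ℝ) / 2))) := by
  haveI : Nonempty (Fin n) := ⟨⟨0, hn⟩⟩
  haveI : Nontrivial (EuclideanSpace ℝ (Fin n)) := inferInstance
  have hdim : Module.finrank ℝ (EuclideanSpace ℝ (Fin n)) = n := finrank_euclideanSpace_fin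
  set c : ℝ := n * (volume (Metric.ball (0 : EuclideanSpace ℝ (Fin n)) 1)).toReal with hc
  have key : ∀ R : ℝ, (∫ x in Metric.closedBall (0 : EuclideanSpace ℝ (Fin n)) R,
      Real.sin ‖x‖ / ‖x‖ ^ n) = c * ∫ y in Ioc (0:ℝ) R, Real.sin y / y := by
    intro R
    have h1 : (∫ x in Metric.closedBall (0 : EuclideanSpace ℝ (Fin n)) R,
          Real.sin ‖x‖ / ‖x‖ ^ n)
        = ∫ x : EuclideanSpace ℝ (Fin n),
            (Iic R).indicator (fun y => Real.sin y / y ^ n) ‖x‖ := by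
      rw [← MeasureTheory.integral_indicator measurableSet_closedBall]
      congr 1
      funext x
      by_cases hx : x ∈ Metric.closedBall (0 : EuclideanSpace ℝ (Fin n)) R
      · rw [Set.indicator_of_mem hx, Set.indicator_of_mem
          (by simpa [Metric.mem_closedBall, dist_zero_right] using hx)]
      · rw [Set.indicator_of_notMem hx, Set.indicator_of_notMem
          (by simpa [Metric.mem_closedBall, dist_zero_right] using hx)]
    rw [h1, MeasureTheory.integral_fun_norm_addHaar volume
      (fun y => (Iic R).indicator (fun y => Real.sin y / y ^ n) y), hdim]
    rw [nsmul_eq_mul, smul_eq_mul, ← mul_assoc, measureReal_def, ← hc]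
    congr 1
    have h2 : ∀ y : ℝ, y ^ (n-1) • (Iic R).indicator (fun y => Real.sin y / y ^ n) y
        = (Iic R).indicator (fun y => y ^ (n-1) * (Real.sin y / y ^ n)) y := by
      intro y
      rw [smul_eq_mul]
      by_cases hy : y ∈ Iic R
      · rw [Set.indicator_of_mem hy, Set.indicator_of_mem hy]
      · rw [Set.indicator_of_notMem hy, Set.indicator_of_notMem hy, mul_zero]
    simp_rw [h2]
    rw [MeasureTheory.setIntegral_indicator measurableSet_Iic, Set.Ioi_inter_Iic]
    refine setIntegral_congr_fun measurableSet_Ioc fun y hy => ?_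
    have hy0 : (0:ℝ) < y := hy.1
    have hpow : (y:ℝ)^n = y^(n-1) * y := by
      rw [← pow_succ, Nat.sub_add_cancel hn]
    rw [hpow]
    field_simp
  have hval : c * (π/2) = π ^ ((n : ℝ) / 2 + 1) / Real.Gamma ((n : ℝ) / 2) := by
    have hvol : (volume (Metric.ball (0 : EuclideanSpace ℝ (Fin n)) 1)).toReal
        = Real.sqrt π ^ n / Real.Gamma (n / 2 + 1) := by
      rw [EuclideanSpace.volume_ball, Fintype.card_fin]
      rw [ENNReal.ofReal_one, one_pow, one_mul, ENNReal.toReal_ofReal]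
      positivity
    have hsqrt : Real.sqrt π ^ n = π ^ ((n:ℝ)/2) := by
      rw [Real.sqrt_eq_rpow, ← Real.rpow_natCast (π ^ ((1:ℝ)/2)) n, ← Real.rpow_mul pi_pos.le]
      ring_nf
    have hn2 : ((n:ℝ)/2) ≠ 0 := by
      have : (1:ℝ) ≤ n := by exact_mod_cast hn
      positivity
    have hgamma : Real.Gamma ((n:ℝ)/2 + 1) = ((n:ℝ)/2) * Real.Gamma ((n:ℝ)/2) :=
      Real.Gamma_add_one hn2
    have hgpos : 0 < Real.Gamma ((n:ℝ)/2) := Real.Gamma_pos_of_pos (by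
      have : (1:ℝ) ≤ n := by exact_mod_cast hn
      positivity)
    have hrpow : π ^ ((n:ℝ)/2 + 1) = π ^ ((n:ℝ)/2) * π := by
      rw [Real.rpow_add_one pi_ne_zero]
    rw [hc, hvol, hsqrt, hgamma, hrpow]
    have hnne : (n:ℝ) ≠ 0 := by positivity
    field_simp
  have h := aux_dirichlet_tendsto.const_mul c
  rw [hval] at h
  exact h.congr fun R => (key R).symm
end

section
/- For real a > 0, ∫_ℝ (a sin y − y cos y) / (y (a² + y²)) dy = π (1 − 2e^{-a})/a, where the integral is an improper (principal value / conditionally convergent) integral over ℝ. -/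
open Real Filter MeasureTheory Set intervalIntegral

set_option maxHeartbeats 1000000

-- integrability of 1/(a²+y²)
lemma integrable_inv_sq_add {a : ℝ} (ha : 0 < a) :
    Integrable (fun y : ℝ => (a ^ 2 + y ^ 2)⁻¹) := by
  have h := (integrable_inv_one_add_sq.comp_div ha.ne')
  have := h.const_mul ((a:ℝ)^2)⁻¹
  refine this.congr (Filter.Eventually.of_forall fun y => ?_)
  have h1 : a^2 + y^2 = a^2 * (1 + (y/a)^2) := by field_simp
  simp only [h1, mul_inv]

-- complex exponential integral over Ioi 0
lemma integrableOn_cexp_neg {c : ℂ} (hc : 0 < c.re) :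
    IntegrableOn (fun x : ℝ => Complex.exp (-(c * x))) (Ioi 0) := by
  have hb : IntegrableOn (fun x : ℝ => Real.exp (-c.re * x)) (Ioi 0) :=
    exp_neg_integrableOn_Ioi 0 hc
  have hcont : Continuous fun x : ℝ => Complex.exp (-(c * x)) := by fun_prop
  refine (hb.mono' hcont.aestronglyMeasurable.restrict ?_)
  filter_upwards with x
  rw [Complex.norm_exp]
  simp [Complex.mul_re]

lemma integral_cexp_neg {c : ℂ} (hc : 0 < c.re) :
    ∫ x : ℝ in Ioi 0, Complex.exp (-(c * x)) = 1 / c := by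
  have hcne : c ≠ 0 := fun h => by simp [h] at hc
  have h1 : Tendsto (fun T : ℝ => ∫ x in (0:ℝ)..T, Complex.exp (-(c * x))) atTop
      (nhds (∫ x : ℝ in Ioi 0, Complex.exp (-(c * x)))) :=
    intervalIntegral_tendsto_integral_Ioi 0 (integrableOn_cexp_neg hc) tendsto_id
  have h2 : Tendsto (fun T : ℝ => ∫ x in (0:ℝ)..T, Complex.exp (-(c * x))) atTop
      (nhds (1 / c)) := by
    have heq : ∀ T : ℝ, ∫ x in (0:ℝ)..T, Complex.exp (-(c * x))
        = (Complex.exp (-c * T) - 1) / (-c) := by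
      intro T
      rw [show (fun x : ℝ => Complex.exp (-(c * x))) = fun x : ℝ => Complex.exp (-c * x) by
        ext x; ring_nf]
      rw [integral_exp_mul_complex (by simpa using hcne)]
      simp
    simp_rw [heq]
    have h3 : Tendsto (fun T : ℝ => Complex.exp (-c * T)) atTop (nhds 0) := by
      rw [tendsto_zero_iff_norm_tendsto_zero]
      have : ∀ T : ℝ, ‖Complex.exp (-c * T)‖ = Real.exp (-(c.re * T)) := by
        intro T
        rw [Complex.norm_exp]
        simp [Complex.mul_re]
      simp_rw [this]
      exact Real.tendsto_exp_atBot.comp (tendsto_neg_atTop_atBot.comp (Tendsto.const_mul_atTop hc tendsto_id))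
    have := h3.sub_const 1
    simpa using (this.div_const (-c))
  exact tendsto_nhds_unique h1 h2

open FourierTransform RealInnerProductSpace
section Main

variable {a : ℝ}

lemma exp_abs_bound (ha : 0 < a) (x : ℝ) :
    Real.exp (-(a * |x|)) ≤ (min 1 (a ^ 2 / 4))⁻¹ * (1 + x ^ 2)⁻¹ := by
  have hm : 0 < min 1 (a ^ 2 / 4) := lt_min one_pos (by positivity)
  rw [Real.exp_neg]
  rw [inv_mul_eq_div, div_eq_mul_inv, ← mul_inv]
  apply inv_anti₀ (by positivity)
  have h1 : 1 + a * |x| / 2 ≤ Real.exp (a * |x| / 2) := Real.add_one_le_exp _ |>.trans_eq' (by ring)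
  have h2 : Real.exp (a * |x| / 2) * Real.exp (a * |x| / 2) = Real.exp (a * |x|) := by
    rw [← Real.exp_add]; ring_nf
  have h3 : (0:ℝ) < 1 + a * |x| / 2 := by positivity
  have h4 := sq_abs x
  nlinarith [min_le_left 1 (a ^ 2 / 4), min_le_right 1 (a ^ 2 / 4), abs_nonneg x, sq_nonneg x,
    sq_nonneg (a * |x| / 2)]

lemma integrable_exp_neg_abs (ha : 0 < a) :
    Integrable (fun x : ℝ => Real.exp (-(a * |x|))) := by
  have hb : Integrable (fun x : ℝ => (min 1 (a ^ 2 / 4))⁻¹ * (1 + x ^ 2)⁻¹) :=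
    integrable_inv_one_add_sq.const_mul _
  refine hb.mono' ?_ ?_
  · exact (Real.continuous_exp.comp (continuous_const.mul continuous_abs).neg).aestronglyMeasurable
  · filter_upwards with x
    rw [Real.norm_eq_abs, abs_of_nonneg (Real.exp_pos _).le]
    exact exp_abs_bound ha x

lemma integrable_cexp_neg_abs (ha : 0 < a) :
    Integrable (fun x : ℝ => (Real.exp (-(a * |x|)) : ℂ)) :=
  (integrable_exp_neg_abs ha).ofReal

lemma integrable_mul_cexp (ha : 0 < a) (g : ℝ → ℂ) (hg : Continuous g)
    (hgb : ∀ x, ‖g x‖ ≤ 1) :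
    Integrable (fun x : ℝ => g x * (Real.exp (-(a * |x|)) : ℂ)) :=
  (integrable_cexp_neg_abs ha).bdd_mul hg.aestronglyMeasurable (c := 1) (ae_of_all _ hgb)

lemma fourier_exp_abs (ha : 0 < a) (ξ : ℝ) :
    𝓕 (fun x : ℝ => (Real.exp (-(a * |x|)) : ℂ)) ξ
      = ((2 * a / (a ^ 2 + (2 * π * ξ) ^ 2) : ℝ) : ℂ) := by
  rw [Real.fourier_eq']
  have hinner : ∀ v : ℝ, @inner ℝ ℝ _ v ξ = v * ξ := fun v => by simp [mul_comm]
  simp only [hinner, smul_eq_mul]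
  set g : ℝ → ℂ := fun x => Complex.exp (↑(-2 * π * (x * ξ)) * Complex.I)
      * (Real.exp (-(a * |x|)) : ℂ) with hgdef
  have hgc : Continuous g := by fun_prop
  have hgi : Integrable g := by
    refine integrable_mul_cexp ha _ (by fun_prop) fun x => ?_
    rw [Complex.norm_exp]
    simp
  have hsplit : (∫ x : ℝ, g x) = (∫ x in Iic (0:ℝ), g x) + ∫ x in Ioi (0:ℝ), g x :=
    (integral_Iic_add_Ioi hgi.integrableOn hgi.integrableOn).symm
  have hpos : (∫ x in Ioi (0:ℝ), g x) = 1 / ((a : ℂ) + 2 * π * ξ * Complex.I) := by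
    rw [← integral_cexp_neg (c := (a : ℂ) + 2 * π * ξ * Complex.I) (by simpa using ha)]
    refine setIntegral_congr_fun measurableSet_Ioi fun x hx => ?_
    rw [hgdef]
    simp only
    rw [abs_of_pos (mem_Ioi.mp hx), Complex.ofReal_exp, ← Complex.exp_add]
    congr 1
    push_cast
    ring
  have hneg : (∫ x in Iic (0:ℝ), g x) = 1 / ((a : ℂ) - 2 * π * ξ * Complex.I) := by
    have hflip := integral_comp_neg_Ioi 0 g
    rw [neg_zero] at hflip
    rw [← hflip,
      ← integral_cexp_neg (c := (a : ℂ) - 2 * π * ξ * Complex.I) (by simpa using ha)]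
    refine setIntegral_congr_fun measurableSet_Ioi fun x hx => ?_
    rw [hgdef]
    simp only
    rw [abs_neg, abs_of_pos (mem_Ioi.mp hx), Complex.ofReal_exp, ← Complex.exp_add]
    congr 1
    push_cast
    ring
  rw [hsplit, hpos, hneg]
  have h1 : ((a : ℂ) + 2 * π * ξ * Complex.I) ≠ 0 := by
    intro h
    have := congrArg Complex.re h
    simp at this
    exact ha.ne' this
  have h2 : ((a : ℂ) - 2 * π * ξ * Complex.I) ≠ 0 := by
    intro h
    have := congrArg Complex.re h
    simp at this
    exact ha.ne' this
  have hd : ((a:ℝ) ^ 2 + (2 * π * ξ) ^ 2 : ℝ) ≠ 0 := by positivity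
  have hdC : ((a:ℂ) ^ 2 + (2 * ↑π * ↑ξ) ^ 2) ≠ 0 := by
    have : ((a:ℂ) ^ 2 + (2 * ↑π * ↑ξ) ^ 2) = ((a ^ 2 + (2 * π * ξ) ^ 2 : ℝ) : ℂ) := by push_cast; ring
    rw [this]
    exact_mod_cast hd
  push_cast
  rw [div_add_div _ _ h2 h1, div_eq_div_iff (mul_ne_zero h2 h1) hdC]
  ring_nf
  simp [Complex.I_sq]

lemma integrable_fourier_explicit (ha : 0 < a) :
    Integrable (fun ξ : ℝ => ((2 * a / (a ^ 2 + (2 * π * ξ) ^ 2) : ℝ) : ℂ)) := by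
  apply Integrable.ofReal
  have hb : Integrable (fun ξ : ℝ => 2 * a * (a ^ 2 + ξ ^ 2)⁻¹) :=
    (integrable_inv_sq_add ha).const_mul _
  refine hb.mono' ?_ ?_
  · refine (continuous_const.div (by fun_prop) fun ξ => ?_).aestronglyMeasurable
    positivity
  · filter_upwards with ξ
    rw [Real.norm_eq_abs,
      abs_of_nonneg (div_nonneg (by linarith) (by positivity)), ← div_eq_mul_inv]
    refine div_le_div_of_nonneg_left (by linarith) ?_ ?_
    · exact add_pos_of_pos_of_nonneg (pow_pos ha 2) (sq_nonneg ξ)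
    · nlinarith [mul_nonneg (show (0:ℝ) ≤ π ^ 2 - 9 by nlinarith [Real.pi_gt_three])
        (sq_nonneg ξ), sq_nonneg ξ]

lemma integrable_fourier (ha : 0 < a) :
    Integrable (𝓕 (fun x : ℝ => (Real.exp (-(a * |x|)) : ℂ))) := by
  rw [show 𝓕 (fun x : ℝ => (Real.exp (-(a * |x|)) : ℂ))
      = fun ξ : ℝ => ((2 * a / (a ^ 2 + (2 * π * ξ) ^ 2) : ℝ) : ℂ) from
    funext (fourier_exp_abs ha)]
  exact integrable_fourier_explicit ha

lemma key_inversion (ha : 0 < a) (t : ℝ) :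
    ∫ ξ : ℝ, Complex.exp (↑(2 * π * (ξ * t)) * Complex.I)
        * ((2 * a / (a ^ 2 + (2 * π * ξ) ^ 2) : ℝ) : ℂ)
      = (Real.exp (-(a * |t|)) : ℂ) := by
  have hf_cont : Continuous (fun x : ℝ => (Real.exp (-(a * |x|)) : ℂ)) := by fun_prop
  have h := hf_cont.fourierInv_fourier_eq (integrable_cexp_neg_abs ha) (integrable_fourier ha)
  have h2 := congrFun h t
  rw [Real.fourierInv_eq'] at h2
  simp only [show ∀ v : ℝ, @inner ℝ ℝ _ v t = v * t from fun _ => by simp [mul_comm],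
    fourier_exp_abs ha, smul_eq_mul] at h2
  exact h2

lemma cos_integral (ha : 0 < a) (t : ℝ) :
    ∫ y : ℝ, Real.cos (t * y) / (a ^ 2 + y ^ 2) = π / a * Real.exp (-(a * |t|)) := by
  have hint : Integrable (fun ξ : ℝ => Complex.exp (↑(2 * π * (ξ * t)) * Complex.I)
      * ((2 * a / (a ^ 2 + (2 * π * ξ) ^ 2) : ℝ) : ℂ)) := by
    refine (integrable_fourier_explicit ha).bdd_mul ?_ (c := 1) (ae_of_all _ fun ξ => ?_)
    · exact (Complex.continuous_exp.comp (by fun_prop)).aestronglyMeasurable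
    · rw [Complex.norm_exp]
      simp
  have hre := Complex.reCLM.integral_comp_comm hint
  simp only [Complex.reCLM_apply] at hre
  rw [key_inversion ha t, Complex.ofReal_re] at hre
  simp only [Complex.mul_re, Complex.exp_ofReal_mul_I_re, Complex.exp_ofReal_mul_I_im,
    Complex.ofReal_re, Complex.ofReal_im, mul_zero, sub_zero] at hre
  set G : ℝ → ℝ := fun y => Real.cos (t * y) * (2 * a / (a ^ 2 + y ^ 2)) with hG
  have hcomp : (fun ξ : ℝ => Real.cos (2 * π * (ξ * t)) * (2 * a / (a ^ 2 + (2 * π * ξ) ^ 2)))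
      = fun ξ : ℝ => G (2 * π * ξ) := by
    funext ξ
    rw [hG]
    simp only
    rw [show 2 * π * (ξ * t) = t * (2 * π * ξ) by ring]
  rw [hcomp, MeasureTheory.Measure.integral_comp_mul_left G (2 * π)] at hre
  have h2pi : |(2 * π)⁻¹| = (2 * π)⁻¹ := abs_of_pos (by positivity)
  rw [h2pi, smul_eq_mul] at hre
  have hintG : (∫ y : ℝ, G y) = 2 * a * ∫ y : ℝ, Real.cos (t * y) / (a ^ 2 + y ^ 2) := by
    rw [← MeasureTheory.integral_const_mul]
    congr 1
    funext y
    rw [hG]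
    simp only
    ring
  have hGval : (∫ y : ℝ, G y) = 2 * π * Real.exp (-(a * |t|)) := by
    have := hre
    field_simp at this ⊢
    linarith
  rw [hGval] at hintG
  have ha' : (2:ℝ) * a ≠ 0 := by positivity
  field_simp at hintG ⊢
  linarith

lemma integrable_cos_div (ha : 0 < a) (t : ℝ) :
    Integrable (fun y : ℝ => Real.cos (t * y) / (a ^ 2 + y ^ 2)) := by
  refine (integrable_inv_sq_add ha).mono' ?_ ?_
  · refine ((Real.continuous_cos.comp (by fun_prop)).div (by fun_prop) fun y => ?_).aestronglyMeasurable
    exact (add_pos_of_pos_of_nonneg (pow_pos ha 2) (sq_nonneg y)).ne'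
  · filter_upwards with y
    have hA : (0:ℝ) < a ^ 2 + y ^ 2 := add_pos_of_pos_of_nonneg (pow_pos ha 2) (sq_nonneg y)
    rw [Real.norm_eq_abs, abs_div, abs_of_pos hA, div_le_iff₀ hA, inv_mul_cancel₀ hA.ne']
    exact Real.abs_cos_le_one _

lemma sin_integral (ha : 0 < a) :
    ∫ y : ℝ, Real.sin y / (y * (a ^ 2 + y ^ 2)) = π / a ^ 2 * (1 - Real.exp (-a)) := by
  set μ := volume.restrict (Ioc (0:ℝ) 1) with hμ
  have hfin : IsFiniteMeasure μ := by
    constructor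
    rw [hμ, Measure.restrict_apply_univ, Real.volume_Ioc]
    simp
  have hA : ∀ y : ℝ, (0:ℝ) < a ^ 2 + y ^ 2 :=
    fun y => add_pos_of_pos_of_nonneg (pow_pos ha 2) (sq_nonneg y)
  have hF : Integrable (Function.uncurry fun t y : ℝ => Real.cos (t * y) / (a ^ 2 + y ^ 2))
      (μ.prod volume) := by
    have hg : Integrable (fun p : ℝ × ℝ => (1:ℝ) * (a ^ 2 + p.2 ^ 2)⁻¹) (μ.prod volume) :=
      (integrable_const 1).mul_prod (integrable_inv_sq_add ha)
    refine hg.mono' ?_ ?_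
    · refine (Continuous.aestronglyMeasurable ?_)
      exact (Real.continuous_cos.comp (by fun_prop)).div (by fun_prop)
        fun p => (hA p.2).ne'
    · filter_upwards with p
      rw [Function.uncurry, Real.norm_eq_abs, abs_div, abs_of_pos (hA p.2), one_mul,
        div_le_iff₀ (hA p.2), inv_mul_cancel₀ (hA p.2).ne']
      exact Real.abs_cos_le_one _
  have hswap := MeasureTheory.integral_integral_swap hF
  -- LHS computation
  have hL : (∫ t, ∫ y : ℝ, Real.cos (t * y) / (a ^ 2 + y ^ 2) ∂volume ∂μ)
      = π / a ^ 2 * (1 - Real.exp (-a)) := by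
    have h1 : (∫ t, ∫ y : ℝ, Real.cos (t * y) / (a ^ 2 + y ^ 2) ∂volume ∂μ)
        = ∫ t in Ioc (0:ℝ) 1, π / a * Real.exp (-a * t) := by
      refine setIntegral_congr_fun measurableSet_Ioc fun t ht => ?_
      rw [cos_integral ha t, abs_of_pos ht.1, neg_mul]
    rw [h1, ← intervalIntegral.integral_of_le zero_le_one,
      intervalIntegral.integral_const_mul]
    have h2 : (∫ t in (0:ℝ)..1, Real.exp (-a * t)) = (1 - Real.exp (-a)) / a := by
      rw [intervalIntegral.integral_comp_mul_left Real.exp (show -a ≠ 0 by simpa using ha.ne'),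
        integral_exp]
      rw [mul_zero, mul_one, Real.exp_zero, smul_eq_mul, inv_mul_eq_div, div_neg, ← neg_div,
        neg_sub]
    rw [h2]
    ring
  -- RHS computation
  have hR : (∫ y : ℝ, ∫ t, Real.cos (t * y) / (a ^ 2 + y ^ 2) ∂μ ∂volume)
      = ∫ y : ℝ, Real.sin y / (y * (a ^ 2 + y ^ 2)) := by
    refine integral_congr_ae ?_
    have h0 : ∀ᵐ y : ℝ ∂volume, y ≠ 0 := by
      refine ae_iff.mpr ?_
      simp only [not_not, Set.setOf_eq_eq_singleton]
      exact Real.volume_singleton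
    filter_upwards [h0] with y hy
    rw [hμ, ← intervalIntegral.integral_of_le zero_le_one, intervalIntegral.integral_div,
      intervalIntegral.integral_comp_mul_right Real.cos hy, integral_cos]
    rw [smul_eq_mul, zero_mul, one_mul, Real.sin_zero, sub_zero, inv_mul_eq_div, div_div]
  rw [hL, hR] at hswap
  exact hswap.symm

lemma integrable_sin_div (ha : 0 < a) :
    Integrable (fun y : ℝ => Real.sin y / (y * (a ^ 2 + y ^ 2))) := by
  have hA : ∀ y : ℝ, (0:ℝ) < a ^ 2 + y ^ 2 :=
    fun y => add_pos_of_pos_of_nonneg (pow_pos ha 2) (sq_nonneg y)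
  refine (integrable_inv_sq_add ha).mono' ?_ ?_
  · refine Measurable.aestronglyMeasurable ?_
    exact Real.measurable_sin.div
      (measurable_id.mul (measurable_const.add (measurable_id.pow_const 2)))
  · filter_upwards with y
    rcases eq_or_ne y 0 with h | h
    · simp [h]
      positivity
    · rw [Real.norm_eq_abs, abs_div, abs_mul, abs_of_pos (hA y),
        div_le_iff₀ (mul_pos (abs_pos.mpr h) (hA y))]
      have h2 : (a ^ 2 + y ^ 2)⁻¹ * (|y| * (a ^ 2 + y ^ 2)) = |y| := by
        field_simp
      rw [h2]
      exact Real.abs_sin_le_abs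

theorem auxiliary_heaviside_integral (a : ℝ) (ha : 0 < a) :
    Tendsto (fun T : ℝ =>
        ∫ y in (-T)..T, (a * Real.sin y - y * Real.cos y) / (y * (a ^ 2 + y ^ 2)))
      atTop
      (nhds (π * (1 - 2 * Real.exp (-a)) / a)) := by
  have hA : ∀ y : ℝ, (0:ℝ) < a ^ 2 + y ^ 2 :=
    fun y => add_pos_of_pos_of_nonneg (pow_pos ha 2) (sq_nonneg y)
  set f : ℝ → ℝ := fun y => (a * Real.sin y - y * Real.cos y) / (y * (a ^ 2 + y ^ 2)) with hfd
  have hint : Integrable f := by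
    refine ((integrable_inv_sq_add ha).const_mul (a + 1)).mono' ?_ ?_
    · refine Measurable.aestronglyMeasurable ?_
      refine Measurable.div ?_ ?_
      · exact (measurable_const.mul Real.measurable_sin).sub
          (measurable_id.mul Real.measurable_cos)
      · exact measurable_id.mul (measurable_const.add (measurable_id.pow_const 2))
    · filter_upwards with y
      rcases eq_or_ne y 0 with h | h
      · rw [hfd]
        simp [h]
        positivity
      · rw [Real.norm_eq_abs, hfd]
        simp only
        rw [abs_div, abs_mul, abs_of_pos (hA y),
          div_le_iff₀ (mul_pos (abs_pos.mpr h) (hA y))]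
        have h1 : |a * Real.sin y - y * Real.cos y| ≤ a * |y| + |y| := by
          calc |a * Real.sin y - y * Real.cos y| ≤ |a * Real.sin y| + |y * Real.cos y| :=
              abs_sub _ _
            _ ≤ a * |y| + |y| := by
              rw [abs_mul, abs_mul, abs_of_pos ha]
              have := Real.abs_sin_le_abs (x := y)
              have h2 := Real.abs_cos_le_one y
              have := abs_nonneg y
              nlinarith [abs_nonneg (Real.sin y)]
        have h2 : (a + 1) * (a ^ 2 + y ^ 2)⁻¹ * (|y| * (a ^ 2 + y ^ 2)) = (a + 1) * |y| := by
          field_simp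
        rw [h2]
        linarith
  have hs : Integrable (fun y : ℝ => Real.sin y / (y * (a ^ 2 + y ^ 2))) := integrable_sin_div ha
  have hc : Integrable (fun y : ℝ => Real.cos y / (a ^ 2 + y ^ 2)) := by
    have := integrable_cos_div ha 1
    simpa using this
  have hval : (∫ y : ℝ, f y)
      = a * (∫ y : ℝ, Real.sin y / (y * (a ^ 2 + y ^ 2)))
        - ∫ y : ℝ, Real.cos y / (a ^ 2 + y ^ 2) := by
    rw [← MeasureTheory.integral_const_mul, ← integral_sub (hs.const_mul a) hc]
    refine integral_congr_ae ?_
    have h0 : ∀ᵐ y : ℝ ∂(volume : Measure ℝ), y ≠ 0 := by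
      refine ae_iff.mpr ?_
      simp only [not_not, Set.setOf_eq_eq_singleton]
      exact Real.volume_singleton
    filter_upwards [h0] with y hy
    rw [hfd]
    simp only
    field_simp
  have hcv : (∫ y : ℝ, Real.cos y / (a ^ 2 + y ^ 2)) = π / a * Real.exp (-a) := by
    have := cos_integral ha 1
    simpa using this
  have htend := MeasureTheory.intervalIntegral_tendsto_integral hint
    tendsto_neg_atTop_atBot (tendsto_id (α := ℝ))
  have hfinal : (∫ y : ℝ, f y) = π * (1 - 2 * Real.exp (-a)) / a := by
    rw [hval, sin_integral ha, hcv]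
    field_simp
    ring
  rw [hfinal] at htend
  exact htend

end Main
end

section
/- Let n ≥ 1, μ > 0, ν₁,…,νₙ > 0, a₀ > 0, and a, b ∈ ℝⁿ with all aₖ, bₖ > 0. Then ∫_{(0,∞)ⁿ} e^{-⟨b,x⟩} (a₀ + ⟨a,x⟩)^{-μ} ∏ₖ xₖ^{νₖ−1} dx = (∏ₖ Γ(νₖ) / Γ(μ)) ∫₀^∞ e^{-a₀ t} t^{μ−1} ∏ₖ (bₖ + aₖ t)^{-νₖ} dt. -/
open Real MeasureTheory

section Aux
open Set
lemma expInt {c p : ℝ} (hc : 0 < c) (hp : 0 < p) :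
    ∫ x in Ioi (0:ℝ), Real.exp (-(c*x)) * x ^ (p-1) = Real.Gamma p * c ^ (-p) := by
  rw [show (∫ x in Ioi (0:ℝ), Real.exp (-(c*x)) * x ^ (p-1))
      = ∫ x in Ioi (0:ℝ), x ^ (p-1) * Real.exp (-(c*x)) by simp [mul_comm],
    Real.integral_rpow_mul_exp_neg_mul_Ioi hp hc]
  rw [one_div, Real.rpow_neg hc.le, ← Real.inv_rpow hc.le, mul_comm]

lemma expIntg {c p : ℝ} (hc : 0 < c) (hp : 0 < p) :
    IntegrableOn (fun x => Real.exp (-(c*x)) * x ^ (p-1)) (Ioi (0:ℝ)) := by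
  have h := integrableOn_rpow_mul_exp_neg_mul_rpow (p := 1) (s := p-1) (by linarith) zero_lt_one hc
  refine h.congr_fun (fun x hx => ?_) measurableSet_Ioi
  simp [Real.rpow_one, neg_mul, mul_comm]

lemma indicator_pi_prod {n : ℕ} (f : Fin n → ℝ → ℝ) (x : Fin n → ℝ) :
    (Set.univ.pi fun _ : Fin n => Ioi (0:ℝ)).indicator (fun x => ∏ k, f k (x k)) x
      = ∏ k, (Ioi (0:ℝ)).indicator (f k) (x k) := by
  by_cases hx : x ∈ Set.univ.pi fun _ : Fin n => Ioi (0:ℝ)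
  · rw [Set.indicator_of_mem hx]
    exact Finset.prod_congr rfl fun k _ => (Set.indicator_of_mem (hx k (Set.mem_univ k)) _).symm
  · rw [Set.indicator_of_notMem hx]
    rw [Set.mem_pi] at hx; push_neg at hx
    obtain ⟨i, -, hi⟩ := hx
    exact (Finset.prod_eq_zero (Finset.mem_univ i) (Set.indicator_of_notMem hi _)).symm

lemma setIntegral_pi_prod {n : ℕ} (f : Fin n → ℝ → ℝ) :
    (∫ x in Set.univ.pi (fun _ : Fin n => Ioi (0:ℝ)), ∏ k, f k (x k))
      = ∏ k, ∫ x in Ioi (0:ℝ), f k x := by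
  rw [← integral_indicator (MeasurableSet.univ_pi fun _ => measurableSet_Ioi)]
  simp_rw [indicator_pi_prod]
  rw [volume_pi, MeasureTheory.integral_fintype_prod_eq_prod (fun k => (Ioi (0:ℝ)).indicator (f k))]
  exact Finset.prod_congr rfl fun k _ => integral_indicator measurableSet_Ioi

lemma integrableOn_pi_prod {n : ℕ} (f : Fin n → ℝ → ℝ)
    (hf : ∀ k, IntegrableOn (f k) (Ioi (0:ℝ))) :
    IntegrableOn (fun x : Fin n → ℝ => ∏ k, f k (x k)) (Set.univ.pi fun _ => Ioi (0:ℝ)) := by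
  rw [← integrable_indicator_iff (MeasurableSet.univ_pi fun _ => measurableSet_Ioi)]
  have : ∀ x, (Set.univ.pi fun _ : Fin n => Ioi (0:ℝ)).indicator
      (fun x => ∏ k, f k (x k)) x = ∏ k, (Ioi (0:ℝ)).indicator (f k) (x k) := indicator_pi_prod f
  rw [show ((Set.univ.pi fun _ : Fin n => Ioi (0:ℝ)).indicator fun x => ∏ k, f k (x k))
      = fun x => ∏ k, (Ioi (0:ℝ)).indicator (f k) (x k) from funext this]
  exact Integrable.fintype_prod fun k =>
    (integrable_indicator_iff measurableSet_Ioi).mpr (hf k)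

end Aux

open Set in
theorem multivariate_euler_laplace (n : ℕ) (hn : 1 ≤ n) (μ : ℝ) (hμ : 0 < μ)
    (ν : Fin n → ℝ) (hν : ∀ k, 0 < ν k) (a₀ : ℝ) (ha₀ : 0 < a₀)
    (a b : Fin n → ℝ) (ha : ∀ k, 0 < a k) (hb : ∀ k, 0 < b k) :
    (∫ x in Set.univ.pi (fun _ : Fin n => Set.Ioi (0:ℝ)),
        Real.exp (-∑ k, b k * x k) * (a₀ + ∑ k, a k * x k) ^ (-μ) *
          ∏ k, x k ^ (ν k - 1)) =
      ((∏ k, Real.Gamma (ν k)) / Real.Gamma μ) *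
        ∫ t in Set.Ioi (0:ℝ),
          Real.exp (-(a₀ * t)) * t ^ (μ - 1) * ∏ k, (b k + a k * t) ^ (-ν k) := by
  have hΓμ : 0 < Real.Gamma μ := Real.Gamma_pos_of_pos hμ
  set S : Set (Fin n → ℝ) := Set.univ.pi (fun _ : Fin n => Set.Ioi (0:ℝ)) with hS
  have hSm : MeasurableSet S := MeasurableSet.univ_pi fun _ => measurableSet_Ioi
  set G : (Fin n → ℝ) → ℝ → ℝ := fun x t =>
    (Real.exp (-(a₀*t)) * t ^ (μ - 1)) *
      ∏ k, (Real.exp (-((b k + a k * t) * x k)) * x k ^ (ν k - 1)) with hG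
  set P : (Fin n → ℝ) → ℝ := fun x => ∏ k, (Real.exp (-(b k * x k)) * x k ^ (ν k - 1)) with hP
  have key : ∀ x t, G x t = P x * (Real.exp (-((a₀ + ∑ k, a k * x k) * t)) * t ^ (μ - 1)) := by
    intro x t
    have h1 : ∀ k : Fin n, Real.exp (-((b k + a k * t) * x k)) * x k ^ (ν k - 1)
        = (Real.exp (-(b k * x k)) * x k ^ (ν k - 1)) * Real.exp (-(a k * x k * t)) := by
      intro k
      rw [show (-((b k + a k * t) * x k)) = (-(b k * x k)) + (-(a k * x k * t)) by ring,
        Real.exp_add]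
      ring
    have h2 : (-((a₀ + ∑ k, a k * x k) * t)) = (-(a₀*t)) + ∑ k, -(a k * x k * t) := by
      rw [Finset.sum_neg_distrib, ← Finset.sum_mul]; ring
    simp only [hG, hP]
    simp_rw [h1]
    rw [Finset.prod_mul_distrib, h2, Real.exp_add, Real.exp_sum]
    ring
  have keyP : ∀ x : Fin n → ℝ,
      Real.exp (-∑ k, b k * x k) * ∏ k, x k ^ (ν k - 1) = P x := by
    intro x
    simp only [hP]
    rw [Finset.prod_mul_distrib,
      show (-∑ k, b k * x k) = ∑ k, -(b k * x k) by rw [Finset.sum_neg_distrib],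
      Real.exp_sum]
  have hsum : ∀ x ∈ S, 0 ≤ ∑ k, a k * x k := fun x hx =>
    Finset.sum_nonneg fun k _ => (mul_pos (ha k) (hx k (Set.mem_univ k))).le
  have hc : ∀ x ∈ S, 0 < a₀ + ∑ k, a k * x k := fun x hx => by linarith [hsum x hx]
  have Pnn : ∀ x ∈ S, 0 ≤ P x := fun x hx => Finset.prod_nonneg fun k _ =>
    mul_nonneg (Real.exp_pos _).le (Real.rpow_nonneg (hx k (Set.mem_univ k)).le _)
  have Pint : IntegrableOn P S := by
    rw [hP, hS]
    exact integrableOn_pi_prod (fun k y => Real.exp (-(b k * y)) * y ^ (ν k - 1))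
      (fun k => expIntg (hb k) (hν k))
  -- Step A
  have stepA : (∫ x in S, Real.exp (-∑ k, b k * x k) * (a₀ + ∑ k, a k * x k) ^ (-μ) *
        ∏ k, x k ^ (ν k - 1))
      = ∫ x in S, (Real.Gamma μ)⁻¹ * ∫ t in Set.Ioi (0:ℝ), G x t := by
    refine setIntegral_congr_fun hSm fun x hx => ?_
    have hcx := hc x hx
    have hval : (∫ t in Set.Ioi (0:ℝ), G x t)
        = P x * (Real.Gamma μ * (a₀ + ∑ k, a k * x k) ^ (-μ)) := by
      simp_rw [key x]
      rw [MeasureTheory.integral_const_mul, expInt hcx hμ]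
    rw [hval, ← keyP x]
    field_simp
  -- measurability
  have hGm : AEStronglyMeasurable (Function.uncurry G)
      ((volume.restrict S).prod (volume.restrict (Set.Ioi (0:ℝ)))) := by
    apply Measurable.aestronglyMeasurable
    rw [hG]
    apply Measurable.mul
    · exact ((measurable_snd.const_mul a₀).neg.exp).mul (measurable_snd.pow_const _)
    · apply Finset.measurable_prod
      intro k _
      apply Measurable.mul
      · exact (((measurable_const.add (measurable_snd.const_mul (a k))).mul
          ((measurable_pi_apply k).comp measurable_fst)).neg).exp
      · exact ((measurable_pi_apply k).comp measurable_fst).pow_const _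
  -- integrability of uncurry G
  have hGint : Integrable (Function.uncurry G)
      ((volume.restrict S).prod (volume.restrict (Set.Ioi (0:ℝ)))) := by
    rw [MeasureTheory.integrable_prod_iff hGm]
    constructor
    · filter_upwards [ae_restrict_mem hSm] with x hx
      have hcx := hc x hx
      have h := (expIntg hcx hμ).const_mul (P x)
      simp only [Function.uncurry_apply_pair]
      exact h.congr (Filter.Eventually.of_forall fun t => (key x t).symm)
    · apply Integrable.mono' (g := fun x => P x * (Real.Gamma μ * a₀ ^ (-μ)))
        (Pint.mul_const _)
      · exact hGm.norm.integral_prod_right'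
      · filter_upwards [ae_restrict_mem hSm] with x hx
        have hcx := hc x hx
        have hval : (∫ t in Set.Ioi (0:ℝ), ‖G x t‖)
            = P x * (Real.Gamma μ * (a₀ + ∑ k, a k * x k) ^ (-μ)) := by
          rw [← expInt hcx hμ, ← MeasureTheory.integral_const_mul]
          refine setIntegral_congr_fun measurableSet_Ioi fun t ht => ?_
          rw [key x t, Real.norm_eq_abs, abs_of_nonneg (mul_nonneg (Pnn x hx)
            (mul_nonneg (Real.exp_pos _).le (Real.rpow_nonneg (le_of_lt ht) _)))]
        have hnn : 0 ≤ ∫ t in Set.Ioi (0:ℝ), ‖G x t‖ :=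
          integral_nonneg fun t => norm_nonneg _
        simp only [Function.uncurry_apply_pair]
        rw [Real.norm_eq_abs, abs_of_nonneg hnn, hval]
        have hle : (a₀ + ∑ k, a k * x k) ^ (-μ) ≤ a₀ ^ (-μ) :=
          Real.rpow_le_rpow_of_nonpos ha₀ (by linarith [hsum x hx]) (by linarith)
        exact mul_le_mul_of_nonneg_left
          (mul_le_mul_of_nonneg_left hle hΓμ.le) (Pnn x hx)
  have swap : (∫ x in S, ∫ t in Set.Ioi (0:ℝ), G x t)
      = ∫ t in Set.Ioi (0:ℝ), ∫ x in S, G x t := integral_integral_swap hGint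
  -- Step C
  have stepC : ∀ t ∈ Set.Ioi (0:ℝ), (∫ x in S, G x t)
      = (∏ k, Real.Gamma (ν k)) *
        (Real.exp (-(a₀*t)) * t ^ (μ - 1) * ∏ k, (b k + a k * t) ^ (-ν k)) := by
    intro t ht
    rw [hG, hS]
    simp only
    rw [MeasureTheory.integral_const_mul,
      setIntegral_pi_prod (fun k y => Real.exp (-((b k + a k * t) * y)) * y ^ (ν k - 1))]
    have hval : ∀ k : Fin n,
        (∫ y in Set.Ioi (0:ℝ), Real.exp (-((b k + a k * t) * y)) * y ^ (ν k - 1))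
          = Real.Gamma (ν k) * (b k + a k * t) ^ (-ν k) := fun k =>
      expInt (add_pos (hb k) (mul_pos (ha k) ht)) (hν k)
    rw [Finset.prod_congr rfl fun k _ => hval k, Finset.prod_mul_distrib]
    ring
  calc (∫ x in S, Real.exp (-∑ k, b k * x k) * (a₀ + ∑ k, a k * x k) ^ (-μ) *
        ∏ k, x k ^ (ν k - 1))
      = ∫ x in S, (Real.Gamma μ)⁻¹ * ∫ t in Set.Ioi (0:ℝ), G x t := stepA
    _ = (Real.Gamma μ)⁻¹ * ∫ x in S, ∫ t in Set.Ioi (0:ℝ), G x t :=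
        MeasureTheory.integral_const_mul _ _
    _ = (Real.Gamma μ)⁻¹ * ∫ t in Set.Ioi (0:ℝ), ∫ x in S, G x t := by rw [swap]
    _ = (Real.Gamma μ)⁻¹ * ∫ t in Set.Ioi (0:ℝ), (∏ k, Real.Gamma (ν k)) *
          (Real.exp (-(a₀*t)) * t ^ (μ - 1) * ∏ k, (b k + a k * t) ^ (-ν k)) := by
        rw [setIntegral_congr_fun measurableSet_Ioi stepC]
    _ = ((∏ k, Real.Gamma (ν k)) / Real.Gamma μ) *
        ∫ t in Set.Ioi (0:ℝ),
          Real.exp (-(a₀ * t)) * t ^ (μ - 1) * ∏ k, (b k + a k * t) ^ (-ν k) := by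
        rw [MeasureTheory.integral_const_mul]
        ring
end
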